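/- arXiv:2510.15475 — 2 statements merged into one kernel-verified Lean document; each statement's English description precedes it below -/
import Mathlib

section
/- Let ζ < 0 and define φ(z) = (e^z − 1)/z for z ≠ 0, φ(0) = 1. If η ≥ 2/|ζ|, then for all λ ≤ 0, φ(ηλ)(λ + ζ) ∈ [ζ, 0]. -/
/-- The first exponential-integrator function φ(z) = (e^z − 1)/z, φ(0) = 1. -/
noncomputable def phi (z : ℝ) : ℝ := if z = 0 then 1 else (Real.exp z - 1) / z

lemma one_sub_mul_exp_le (x : ℝ) : (1 - x) * Real.exp x ≤ 1 := by
  rcases le_or_gt 1 x with h | h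
  · nlinarith [Real.exp_pos x]
  · have h1 : 1 - x ≤ Real.exp (-x) := by
      have := Real.add_one_le_exp (-x); linarith
    have h2 : (1 - x) * Real.exp x ≤ Real.exp (-x) * Real.exp x := by
      have := Real.exp_pos x; nlinarith
    calc (1 - x) * Real.exp x ≤ Real.exp (-x) * Real.exp x := h2
      _ = 1 := by rw [← Real.exp_add]; simp

lemma key_ineq (u : ℝ) (hu : 0 ≤ u) : (2 - u) * Real.exp u ≤ u + 2 := by
  set f : ℝ → ℝ := fun x => x + 2 - (2 - x) * Real.exp x with hf
  have H : ∀ x : ℝ, HasDerivAt f (1 - (1 - x) * Real.exp x) x := by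
    intro x
    have h1 : HasDerivAt (fun x : ℝ => (2 - x) * Real.exp x)
        ((-1) * Real.exp x + (2 - x) * Real.exp x) x :=
      ((hasDerivAt_id x).const_sub 2).mul (Real.hasDerivAt_exp x)
    have h2 := ((hasDerivAt_id x).add_const 2).sub h1
    rw [show (1 - (1 - x) * Real.exp x) = 1 - (-1 * Real.exp x + (2 - x) * Real.exp x) by ring]
    exact h2
  have mono : MonotoneOn f (Set.Ici (0 : ℝ)) := by
    apply monotoneOn_of_deriv_nonneg (convex_Ici 0)
    · exact Continuous.continuousOn (by continuity)
    · intro x _; exact (H x).differentiableAt.differentiableWithinAt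
    · intro x _
      rw [(H x).deriv]
      have := one_sub_mul_exp_le x
      linarith
  have h0 : f 0 ≤ f u := mono (by simp) (by simpa using hu) hu
  have hf0 : f 0 = 0 := by simp [hf]
  have hfu : f u = u + 2 - (2 - u) * Real.exp u := rfl
  linarith

lemma g_nonpos (z : ℝ) (hz : z ≤ 0) : (z - 2) * Real.exp z + z + 2 ≤ 0 := by
  have h := key_ineq (-z) (by linarith)
  -- (2 + z) * exp (-z) ≤ -z + 2
  have hez : Real.exp (-z) * Real.exp z = 1 := by rw [← Real.exp_add]; simp
  have hep := Real.exp_pos z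
  nlinarith [mul_le_mul_of_nonneg_right h (le_of_lt hep)]

theorem stmt_8 (ζ : ℝ) (hζ : ζ < 0) (η : ℝ) (hη : 2 / |ζ| ≤ η) (lam : ℝ) (hlam : lam ≤ 0) :
    phi (η * lam) * (lam + ζ) ∈ Set.Icc ζ 0 := by
  have habs : |ζ| = -ζ := abs_of_neg hζ
  have hnz : (0:ℝ) < -ζ := by linarith
  have hη2 : 2 ≤ η * (-ζ) := by
    rw [habs] at hη
    exact (div_le_iff₀ hnz).mp hη
  have hηpos : 0 < η := by nlinarith
  rcases eq_or_lt_of_le hlam with hlam0 | hlamneg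
  · subst hlam0
    simp [phi]
    linarith
  · have hzneg : η * lam < 0 := mul_neg_of_pos_of_neg hηpos hlamneg
    have hzne : η * lam ≠ 0 := ne_of_lt hzneg
    set z := η * lam with hzdef
    have hphi : phi z = (Real.exp z - 1) / z := by simp [phi, hzne]
    have hez1 : Real.exp z < 1 := by
      rw [← Real.exp_zero]; exact Real.exp_lt_exp.mpr hzneg
    have hexpz : z + 1 ≤ Real.exp z := Real.add_one_le_exp z
    have hg := g_nonpos z (le_of_lt hzneg)
    constructor
    · -- ζ ≤ (exp z - 1)/z * (lam + ζ)
      rw [hphi, div_mul_eq_mul_div, le_div_iff_of_neg hzneg]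
      -- goal: (exp z - 1) * (lam + ζ) ≤ ζ * z
      have hfac : 0 ≤ Real.exp z - 1 - z := by linarith
      have hζη : ζ * η + 2 ≤ 0 := by nlinarith
      nlinarith [mul_nonneg (by linarith : (0:ℝ) ≤ -2 - ζ * η) hfac,
        mul_pos hηpos hηpos]
    · -- ≤ 0
      have hphipos : 0 ≤ phi z := by
        rw [hphi]
        exact le_of_lt (div_pos_of_neg_of_neg (by linarith) hzneg)
      exact mul_nonpos_of_nonneg_of_nonpos hphipos (by linarith)
end

section
/- For fixed ε > 0, with ω₀ = 1 + ε/m² and α_m(ε) = T_m(ω₀)T_m''(ω₀)/T_m'(ω₀)², the limit as m → ∞ of α_m(ε) equals (1/tanh(√(2ε)))·(1/tanh(√(2ε)) − 1/√(2ε)). -/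
open Polynomial Polynomial.Chebyshev

lemma T_real_cosh (n : ℤ) (t : ℝ) : (T ℝ n).eval (Real.cosh t) = Real.cosh (n * t) := by
  have h := Polynomial.Chebyshev.T_complex_cos ((t : ℂ) * Complex.I) n
  rw [Complex.cos_mul_I] at h
  have h2 : (n : ℂ) * ((t : ℂ) * Complex.I) = ((n * t : ℝ) : ℂ) * Complex.I := by
    push_cast; ring
  rw [h2, Complex.cos_mul_I] at h
  have h3 := Polynomial.Chebyshev.complex_ofReal_eval_T (Real.cosh t) n
  rw [Complex.ofReal_cosh] at h3
  have : ((((T ℝ n).eval (Real.cosh t)) : ℝ) : ℂ) = ((Real.cosh ((n:ℝ) * t) : ℝ) : ℂ) := by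
    rw [h3, h, Complex.ofReal_cosh]
  exact_mod_cast this

lemma deriv_T_cosh (n : ℤ) (t : ℝ) (ht : Real.sinh t ≠ 0) :
    (derivative (T ℝ n)).eval (Real.cosh t)
      = (n : ℝ) * Real.sinh ((n : ℝ) * t) / Real.sinh t := by
  have h1 : HasDerivAt (fun s : ℝ => (T ℝ n).eval (Real.cosh s))
      ((derivative (T ℝ n)).eval (Real.cosh t) * Real.sinh t) t :=
    (Polynomial.hasDerivAt (T ℝ n) (Real.cosh t)).comp t (Real.hasDerivAt_cosh t)
  have h2 : HasDerivAt (fun s : ℝ => Real.cosh ((n : ℝ) * s))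
      ((n : ℝ) * Real.sinh ((n : ℝ) * t)) t := by
    have := (Real.hasDerivAt_cosh ((n : ℝ) * t)).comp t ((hasDerivAt_id t).const_mul (n : ℝ))
    simp only [Function.comp_def, id_eq, mul_one] at this
    simpa [mul_comm] using this
  have heq : (fun s : ℝ => (T ℝ n).eval (Real.cosh s)) = fun s => Real.cosh ((n : ℝ) * s) := by
    funext s; exact_mod_cast T_real_cosh n s
  rw [heq] at h1
  have := h1.unique h2
  field_simp
  linarith [this]

lemma deriv2_T_cosh (n : ℤ) (t : ℝ) (ht : 0 < t) :
    (derivative (derivative (T ℝ n))).eval (Real.cosh t)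
      = (n : ℝ) * ((n : ℝ) * Real.cosh ((n : ℝ) * t) * Real.sinh t
          - Real.sinh ((n : ℝ) * t) * Real.cosh t) / (Real.sinh t) ^ 3 := by
  have hst : 0 < Real.sinh t := Real.sinh_pos_iff.2 ht
  have h1 : HasDerivAt (fun s : ℝ => (derivative (T ℝ n)).eval (Real.cosh s))
      ((derivative (derivative (T ℝ n))).eval (Real.cosh t) * Real.sinh t) t :=
    (Polynomial.hasDerivAt (derivative (T ℝ n)) (Real.cosh t)).comp t (Real.hasDerivAt_cosh t)
  -- derivative of numerator n * sinh (n s)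
  have hnum : HasDerivAt (fun s : ℝ => (n : ℝ) * Real.sinh ((n : ℝ) * s))
      ((n : ℝ) * ((n : ℝ) * Real.cosh ((n : ℝ) * t))) t := by
    have := (Real.hasDerivAt_sinh ((n : ℝ) * t)).comp t ((hasDerivAt_id t).const_mul (n : ℝ))
    simp only [Function.comp_def, id_eq, mul_one] at this
    simpa [mul_comm] using this.const_mul (n : ℝ)
  have h2 : HasDerivAt (fun s : ℝ => (n : ℝ) * Real.sinh ((n : ℝ) * s) / Real.sinh s)
      (((n : ℝ) * ((n : ℝ) * Real.cosh ((n : ℝ) * t)) * Real.sinh t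
        - (n : ℝ) * Real.sinh ((n : ℝ) * t) * Real.cosh t) / (Real.sinh t) ^ 2) t :=
    hnum.div (Real.hasDerivAt_sinh t) hst.ne'
  have heq : (fun s : ℝ => (derivative (T ℝ n)).eval (Real.cosh s))
      =ᶠ[nhds t] (fun s : ℝ => (n : ℝ) * Real.sinh ((n : ℝ) * s) / Real.sinh s) := by
    filter_upwards [eventually_gt_nhds ht] with s hs
    exact deriv_T_cosh n s (Real.sinh_pos_iff.2 hs).ne'
  have h1' := h2.congr_of_eventuallyEq heq
  have huniq := h1.unique h1'
  rw [eq_div_iff (by positivity : (Real.sinh t) ^ 3 ≠ 0)]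
  rw [eq_div_iff (pow_ne_zero 2 hst.ne')] at huniq
  linear_combination huniq


/-- `α_m(ε) = T_m(ω₀) T_m''(ω₀) / T_m'(ω₀)²` with `ω₀ = 1 + ε/m²`. -/
noncomputable def alpha (m : ℕ) (ε : ℝ) : ℝ :=
  (T ℝ m).eval (1 + ε / (m : ℝ) ^ 2) *
      (derivative (derivative (T ℝ m))).eval (1 + ε / (m : ℝ) ^ 2) /
    ((derivative (T ℝ m)).eval (1 + ε / (m : ℝ) ^ 2)) ^ 2

lemma alpha_eq (ε : ℝ) (hε : 0 < ε) (m : ℕ) (hm : 1 ≤ m) :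
    alpha m ε =
      Real.cosh ((m : ℝ) * Real.arsinh (Real.sqrt (2 * ε + ε ^ 2 / (m : ℝ) ^ 2) / (m : ℝ))) *
        (Real.cosh ((m : ℝ) * Real.arsinh (Real.sqrt (2 * ε + ε ^ 2 / (m : ℝ) ^ 2) / (m : ℝ))) *
            Real.sqrt (2 * ε + ε ^ 2 / (m : ℝ) ^ 2)
          - Real.sinh ((m : ℝ) * Real.arsinh (Real.sqrt (2 * ε + ε ^ 2 / (m : ℝ) ^ 2) / (m : ℝ)))
              * (1 + ε / (m : ℝ) ^ 2)) /
      ((Real.sinh ((m : ℝ) * Real.arsinh (Real.sqrt (2 * ε + ε ^ 2 / (m : ℝ) ^ 2) / (m : ℝ)))) ^ 2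
        * Real.sqrt (2 * ε + ε ^ 2 / (m : ℝ) ^ 2)) := by
  have hm0 : (0 : ℝ) < m := by exact_mod_cast hm
  have hX : 0 < 2 * ε + ε ^ 2 / (m : ℝ) ^ 2 := by positivity
  set b := Real.sqrt (2 * ε + ε ^ 2 / (m : ℝ) ^ 2) with hbdef
  have hb : 0 < b := Real.sqrt_pos.2 hX
  set t := Real.arsinh (b / (m : ℝ)) with htdef
  have hσ : 0 < b / (m : ℝ) := by positivity
  have ht : 0 < t := Real.arsinh_pos_iff.2 hσ
  have hsinh_t : Real.sinh t = b / (m : ℝ) := Real.sinh_arsinh _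
  have hcosh_t : Real.cosh t = 1 + ε / (m : ℝ) ^ 2 := by
    rw [htdef, Real.cosh_arsinh]
    have h1 : (b / (m : ℝ)) ^ 2 = (2 * ε + ε ^ 2 / (m : ℝ) ^ 2) / (m : ℝ) ^ 2 := by
      rw [div_pow, hbdef, Real.sq_sqrt hX.le]
    rw [h1]
    have h2 : 1 + (2 * ε + ε ^ 2 / (m : ℝ) ^ 2) / (m : ℝ) ^ 2 = (1 + ε / (m : ℝ) ^ 2) ^ 2 := by
      field_simp; ring
    rw [h2, Real.sqrt_sq (by positivity)]
  have hst : 0 < Real.sinh t := Real.sinh_pos_iff.2 ht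
  have hA : 0 < (m : ℝ) * t := by positivity
  have hsA : 0 < Real.sinh ((m : ℝ) * t) := Real.sinh_pos_iff.2 hA
  have e1 : (T ℝ (m : ℤ)).eval (Real.cosh t) = Real.cosh ((m : ℝ) * t) := by
    have := T_real_cosh (m : ℤ) t; push_cast at this; exact this
  have e2 : (derivative (T ℝ (m : ℤ))).eval (Real.cosh t)
      = (m : ℝ) * Real.sinh ((m : ℝ) * t) / Real.sinh t := by
    have := deriv_T_cosh (m : ℤ) t hst.ne'; push_cast at this; exact this
  have e3 : (derivative (derivative (T ℝ (m : ℤ)))).eval (Real.cosh t)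
      = (m : ℝ) * ((m : ℝ) * Real.cosh ((m : ℝ) * t) * Real.sinh t
          - Real.sinh ((m : ℝ) * t) * Real.cosh t) / (Real.sinh t) ^ 3 := by
    have := deriv2_T_cosh (m : ℤ) t ht; push_cast at this; exact this
  unfold alpha
  rw [← hcosh_t, e1, e2, e3, hsinh_t, hcosh_t]
  field_simp


open Filter Real

theorem stmt_16 (ε : ℝ) (hε : 0 < ε) :
    Filter.Tendsto (fun m : ℕ => alpha m ε) Filter.atTop
      (nhds ((1 / Real.tanh (Real.sqrt (2 * ε))) *
        (1 / Real.tanh (Real.sqrt (2 * ε)) - 1 / Real.sqrt (2 * ε)))) := by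
  have h2ε : (0 : ℝ) < 2 * ε := by linarith
  set s := Real.sqrt (2 * ε) with hsdef
  have hs : 0 < s := Real.sqrt_pos.2 h2ε
  have hpow : Tendsto (fun m : ℕ => (m : ℝ) ^ 2) atTop atTop :=
    (tendsto_pow_atTop two_ne_zero).comp tendsto_natCast_atTop_atTop
  have hXlim : Tendsto (fun m : ℕ => 2 * ε + ε ^ 2 / (m : ℝ) ^ 2) atTop (nhds (2 * ε)) := by
    have h0 : Tendsto (fun m : ℕ => ε ^ 2 / (m : ℝ) ^ 2) atTop (nhds 0) :=
      tendsto_const_nhds.div_atTop hpow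
    simpa using tendsto_const_nhds.add h0
  have hb : Tendsto (fun m : ℕ => Real.sqrt (2 * ε + ε ^ 2 / (m : ℝ) ^ 2)) atTop (nhds s) :=
    hXlim.sqrt
  have hσ0 : Tendsto (fun m : ℕ => Real.sqrt (2 * ε + ε ^ 2 / (m : ℝ) ^ 2) / (m : ℝ)) atTop
      (nhds 0) := hb.div_atTop tendsto_natCast_atTop_atTop
  have hσpos : ∀ m : ℕ, 1 ≤ m → 0 < Real.sqrt (2 * ε + ε ^ 2 / (m : ℝ) ^ 2) / (m : ℝ) := by
    intro m hm
    have hm0 : (0 : ℝ) < m := by exact_mod_cast hm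
    have : 0 < 2 * ε + ε ^ 2 / (m : ℝ) ^ 2 := by positivity
    positivity
  have hσne : ∀ᶠ m : ℕ in atTop,
      Real.sqrt (2 * ε + ε ^ 2 / (m : ℝ) ^ 2) / (m : ℝ) ∈ ({0}ᶜ : Set ℝ) := by
    filter_upwards [eventually_ge_atTop 1] with m hm
    exact (hσpos m hm).ne'
  have hratio : Tendsto (fun m : ℕ =>
      Real.arsinh (Real.sqrt (2 * ε + ε ^ 2 / (m : ℝ) ^ 2) / (m : ℝ)) /
        (Real.sqrt (2 * ε + ε ^ 2 / (m : ℝ) ^ 2) / (m : ℝ))) atTop (nhds 1) := by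
    have hd : HasDerivAt Real.arsinh 1 0 := by
      simpa using Real.hasDerivAt_arsinh 0
    have hslope := hasDerivAt_iff_tendsto_slope.1 hd
    have hcomp := hslope.comp (tendsto_nhdsWithin_iff.2 ⟨hσ0, hσne⟩)
    simpa [Function.comp_def, slope_def_field, Real.arsinh_zero] using hcomp
  have hA : Tendsto (fun m : ℕ =>
      (m : ℝ) * Real.arsinh (Real.sqrt (2 * ε + ε ^ 2 / (m : ℝ) ^ 2) / (m : ℝ))) atTop
      (nhds s) := by
    have h1 := hratio.mul hb
    rw [one_mul] at h1
    refine Filter.Tendsto.congr' ?_ h1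
    filter_upwards [eventually_ge_atTop 1] with m hm
    have hm0 : (0 : ℝ) < m := by exact_mod_cast hm
    have hX : 0 < 2 * ε + ε ^ 2 / (m : ℝ) ^ 2 := by positivity
    have hbpos : 0 < Real.sqrt (2 * ε + ε ^ 2 / (m : ℝ) ^ 2) := Real.sqrt_pos.2 hX
    field_simp
  have hcoshA := (Real.continuous_cosh.tendsto s).comp hA
  have hsinhA := (Real.continuous_sinh.tendsto s).comp hA
  have hc : Tendsto (fun m : ℕ => 1 + ε / (m : ℝ) ^ 2) atTop (nhds 1) := by
    have h0 : Tendsto (fun m : ℕ => ε / (m : ℝ) ^ 2) atTop (nhds 0) :=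
      tendsto_const_nhds.div_atTop hpow
    simpa using tendsto_const_nhds.add h0
  have hsinh_s : 0 < Real.sinh s := Real.sinh_pos_iff.2 hs
  have hden_ne : Real.sinh s ^ 2 * s ≠ 0 := by positivity
  have hmain := ((hcoshA.mul ((hcoshA.mul hb).sub (hsinhA.mul hc)))).div
      ((hsinhA.pow 2).mul hb) hden_ne
  have hval : Real.cosh s * (Real.cosh s * s - Real.sinh s * 1) / (Real.sinh s ^ 2 * s)
      = (1 / Real.tanh s) * (1 / Real.tanh s - 1 / s) := by
    rw [Real.tanh_eq_sinh_div_cosh]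
    have hcosh_ne : Real.cosh s ≠ 0 := (Real.cosh_pos s).ne'
    field_simp
  rw [← hval]
  refine Filter.Tendsto.congr' ?_ hmain
  filter_upwards [eventually_ge_atTop 1] with m hm
  exact (alpha_eq ε hε m hm).symm
end
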